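/- Let α, β, γ > 0 and μ, ν ∈ ℝ with τ := μ² + ν² > 0 and βγ > τ. Define λ_± = (β+γ)/2 ± (1/2)√(4τ + (β−γ)²), the vectors H_± = (0, λ_±−γ, 0, μ, ν)ᵀ and B_± = (0, 0, λ_±−γ, −ν, μ)ᵀ in ℝ⁵, the scalars f_± = √(λ_±·(τ + (λ_±−γ)²)), and e₁ = (1,0,0,0,0)ᵀ. Then g(α,β,γ,μ,ν)·H_± = λ_±·H_±, g(α,β,γ,μ,ν)·B_± = λ_±·B_±, and the five vectors e₁/√α, H₊/f₊, H₋/f₋, B₊/f₊, B₋/f₋ form a basis of ℝ⁵ that is orthonormal with respect to the inner product (u,v) ↦ uᵀ·g(α,β,γ,μ,ν)·v. -/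

import Mathlib

/-- The matrix of the `Ad`-invariant inner product with parameters `α β γ μ ν` in the
ordered basis `(c₃, c₁, c₂, F, G)` (resp. `(A, B, C, D, E)`). -/
def metricMatrix (α β γ μ ν : ℝ) : Matrix (Fin 5) (Fin 5) ℝ :=
  !![α, 0, 0, 0, 0;
     0, β, 0, μ, ν;
     0, 0, β, -ν, μ;
     0, μ, -ν, γ, 0;
     0, ν, μ, 0, γ]

set_option maxHeartbeats 2000000 in
/-- Diagonalization of the metric `g(α,β,γ,μ,ν)` with `τ := μ² + ν² > 0` and `βγ > τ`:
the vectors `H_± = (0, λ_±−γ, 0, μ, ν)` and `B_± = (0, 0, λ_±−γ, −ν, μ)` are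
eigenvectors of `g` for the eigenvalues `λ_± = (β+γ)/2 ± (1/2)√(4τ+(β−γ)²)`, and
`(e₁/√α, H₊/f₊, H₋/f₋, B₊/f₊, B₋/f₋)`, with `f_± = √(λ_±(τ+(λ_±−γ)²))`, is a basis
of `ℝ⁵` orthonormal for the inner product `(u,v) ↦ uᵀ·g·v`. -/
theorem metric_orthonormal_basis (α β γ μ ν τ lamP lamM fP fM : ℝ)
    (hτ : τ = μ ^ 2 + ν ^ 2)
    (hα : 0 < α) (hβ : 0 < β) (hγ : 0 < γ)
    (hτpos : 0 < τ) (hpd : τ < β * γ)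
    (hlamP : lamP = (β + γ) / 2 + Real.sqrt (4 * τ + (β - γ) ^ 2) / 2)
    (hlamM : lamM = (β + γ) / 2 - Real.sqrt (4 * τ + (β - γ) ^ 2) / 2)
    (hfP : fP = Real.sqrt (lamP * (τ + (lamP - γ) ^ 2)))
    (hfM : fM = Real.sqrt (lamM * (τ + (lamM - γ) ^ 2)))
    (HP HM BP BM e₁ : Fin 5 → ℝ)
    (hHP : HP = ![0, lamP - γ, 0, μ, ν])
    (hHM : HM = ![0, lamM - γ, 0, μ, ν])
    (hBP : BP = ![0, 0, lamP - γ, -ν, μ])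
    (hBM : BM = ![0, 0, lamM - γ, -ν, μ])
    (he₁ : e₁ = ![1, 0, 0, 0, 0])
    (v : Fin 5 → Fin 5 → ℝ)
    (hv : v = ![(Real.sqrt α)⁻¹ • e₁, fP⁻¹ • HP, fM⁻¹ • HM, fP⁻¹ • BP, fM⁻¹ • BM]) :
    (metricMatrix α β γ μ ν).mulVec HP = lamP • HP ∧
    (metricMatrix α β γ μ ν).mulVec HM = lamM • HM ∧
    (metricMatrix α β γ μ ν).mulVec BP = lamP • BP ∧
    (metricMatrix α β γ μ ν).mulVec BM = lamM • BM ∧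
    LinearIndependent ℝ v ∧
    Submodule.span ℝ (Set.range v) = ⊤ ∧
    ∀ i j, dotProduct (v i) ((metricMatrix α β γ μ ν).mulVec (v j)) =
      if i = j then 1 else 0 := by
  have hd0 : (0:ℝ) ≤ Real.sqrt (4 * τ + (β - γ) ^ 2) := Real.sqrt_nonneg _
  have hd2 : Real.sqrt (4 * τ + (β - γ) ^ 2) ^ 2 = 4 * τ + (β - γ) ^ 2 :=
    Real.sq_sqrt (by positivity)
  have h1 : (lamP - β) * (lamP - γ) = τ := by rw [hlamP]; linear_combination hd2 / 4
  have h2 : (lamM - β) * (lamM - γ) = τ := by rw [hlamM]; linear_combination hd2 / 4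
  have h3 : (lamP - γ) * (lamM - γ) = -τ := by
    rw [hlamP, hlamM]; linear_combination -hd2 / 4
  have hprod : lamP * lamM = β * γ - τ := by
    rw [hlamP, hlamM]; linear_combination -hd2 / 4
  have hlamPpos : 0 < lamP := by rw [hlamP]; nlinarith
  have hlamMpos : 0 < lamM := by nlinarith
  have hfP2 : fP ^ 2 = lamP * (τ + (lamP - γ) ^ 2) := by
    rw [hfP]; exact Real.sq_sqrt (by positivity)
  have hfM2 : fM ^ 2 = lamM * (τ + (lamM - γ) ^ 2) := by
    rw [hfM]; exact Real.sq_sqrt (by positivity)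
  have hfPpos : 0 < fP := by rw [hfP]; exact Real.sqrt_pos.2 (by positivity)
  have hfMpos : 0 < fM := by rw [hfM]; exact Real.sqrt_pos.2 (by positivity)
  have hfPne : fP ≠ 0 := ne_of_gt hfPpos
  have hfMne : fM ≠ 0 := ne_of_gt hfMpos
  have hsa2 : Real.sqrt α ^ 2 = α := Real.sq_sqrt hα.le
  have hsane : Real.sqrt α ≠ 0 := ne_of_gt (Real.sqrt_pos.2 hα)
  subst hτ hHP hHM hBP hBM he₁ hv
  have eHP : (metricMatrix α β γ μ ν).mulVec ![0, lamP - γ, 0, μ, ν]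
      = lamP • ![0, lamP - γ, 0, μ, ν] := by
    funext i; fin_cases i <;>
      simp [metricMatrix, Matrix.mulVec, dotProduct, Fin.sum_univ_five] <;>
      ring_nf <;> linear_combination -h1
  have eHM : (metricMatrix α β γ μ ν).mulVec ![0, lamM - γ, 0, μ, ν]
      = lamM • ![0, lamM - γ, 0, μ, ν] := by
    funext i; fin_cases i <;>
      simp [metricMatrix, Matrix.mulVec, dotProduct, Fin.sum_univ_five] <;>
      ring_nf <;> linear_combination -h2
  have eBP : (metricMatrix α β γ μ ν).mulVec ![0, 0, lamP - γ, -ν, μ]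
      = lamP • ![0, 0, lamP - γ, -ν, μ] := by
    funext i; fin_cases i <;>
      simp [metricMatrix, Matrix.mulVec, dotProduct, Fin.sum_univ_five] <;>
      ring_nf <;> linear_combination -h1
  have eBM : (metricMatrix α β γ μ ν).mulVec ![0, 0, lamM - γ, -ν, μ]
      = lamM • ![0, 0, lamM - γ, -ν, μ] := by
    funext i; fin_cases i <;>
      simp [metricMatrix, Matrix.mulVec, dotProduct, Fin.sum_univ_five] <;>
      ring_nf <;> linear_combination -h2
  have ge₁ : (metricMatrix α β γ μ ν).mulVec ![1, 0, 0, 0, 0]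
      = α • ![(1:ℝ), 0, 0, 0, 0] := by
    funext i; fin_cases i <;>
      simp [metricMatrix, Matrix.mulVec, dotProduct, Fin.sum_univ_five]
  have dee : dotProduct ![(1:ℝ),0,0,0,0] ![(1:ℝ),0,0,0,0] = 1 := by
    simp [dotProduct, Fin.sum_univ_five]
  have deHP : dotProduct ![(1:ℝ),0,0,0,0] ![0, lamP - γ, 0, μ, ν] = 0 := by
    simp [dotProduct, Fin.sum_univ_five]
  have deHM : dotProduct ![(1:ℝ),0,0,0,0] ![0, lamM - γ, 0, μ, ν] = 0 := by
    simp [dotProduct, Fin.sum_univ_five]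
  have deBP : dotProduct ![(1:ℝ),0,0,0,0] ![0, 0, lamP - γ, -ν, μ] = 0 := by
    simp [dotProduct, Fin.sum_univ_five]
  have deBM : dotProduct ![(1:ℝ),0,0,0,0] ![0, 0, lamM - γ, -ν, μ] = 0 := by
    simp [dotProduct, Fin.sum_univ_five]
  have dHPe : dotProduct ![0, lamP - γ, 0, μ, ν] ![(1:ℝ),0,0,0,0] = 0 := by
    simp [dotProduct, Fin.sum_univ_five]
  have dHMe : dotProduct ![0, lamM - γ, 0, μ, ν] ![(1:ℝ),0,0,0,0] = 0 := by
    simp [dotProduct, Fin.sum_univ_five]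
  have dBPe : dotProduct ![0, 0, lamP - γ, -ν, μ] ![(1:ℝ),0,0,0,0] = 0 := by
    simp [dotProduct, Fin.sum_univ_five]
  have dBMe : dotProduct ![0, 0, lamM - γ, -ν, μ] ![(1:ℝ),0,0,0,0] = 0 := by
    simp [dotProduct, Fin.sum_univ_five]
  have dHPHP : dotProduct ![0, lamP - γ, 0, μ, ν] ![0, lamP - γ, 0, μ, ν]
      = μ ^ 2 + ν ^ 2 + (lamP - γ) ^ 2 := by
    simp [dotProduct, Fin.sum_univ_five]; ring
  have dHMHM : dotProduct ![0, lamM - γ, 0, μ, ν] ![0, lamM - γ, 0, μ, ν]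
      = μ ^ 2 + ν ^ 2 + (lamM - γ) ^ 2 := by
    simp [dotProduct, Fin.sum_univ_five]; ring
  have dBPBP : dotProduct ![0, 0, lamP - γ, -ν, μ] ![0, 0, lamP - γ, -ν, μ]
      = μ ^ 2 + ν ^ 2 + (lamP - γ) ^ 2 := by
    simp [dotProduct, Fin.sum_univ_five]; ring
  have dBMBM : dotProduct ![0, 0, lamM - γ, -ν, μ] ![0, 0, lamM - γ, -ν, μ]
      = μ ^ 2 + ν ^ 2 + (lamM - γ) ^ 2 := by
    simp [dotProduct, Fin.sum_univ_five]; ring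
  have dHPHM : dotProduct ![0, lamP - γ, 0, μ, ν] ![0, lamM - γ, 0, μ, ν] = 0 := by
    simp [dotProduct, Fin.sum_univ_five]; linear_combination h3
  have dHMHP : dotProduct ![0, lamM - γ, 0, μ, ν] ![0, lamP - γ, 0, μ, ν] = 0 := by
    simp [dotProduct, Fin.sum_univ_five]; linear_combination h3
  have dBPBM : dotProduct ![0, 0, lamP - γ, -ν, μ] ![0, 0, lamM - γ, -ν, μ] = 0 := by
    simp [dotProduct, Fin.sum_univ_five]; linear_combination h3
  have dBMBP : dotProduct ![0, 0, lamM - γ, -ν, μ] ![0, 0, lamP - γ, -ν, μ] = 0 := by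
    simp [dotProduct, Fin.sum_univ_five]; linear_combination h3
  have dHPBP : dotProduct ![0, lamP - γ, 0, μ, ν] ![0, 0, lamP - γ, -ν, μ] = 0 := by
    simp [dotProduct, Fin.sum_univ_five]; ring
  have dHPBM : dotProduct ![0, lamP - γ, 0, μ, ν] ![0, 0, lamM - γ, -ν, μ] = 0 := by
    simp [dotProduct, Fin.sum_univ_five]; ring
  have dHMBP : dotProduct ![0, lamM - γ, 0, μ, ν] ![0, 0, lamP - γ, -ν, μ] = 0 := by
    simp [dotProduct, Fin.sum_univ_five]; ring
  have dHMBM : dotProduct ![0, lamM - γ, 0, μ, ν] ![0, 0, lamM - γ, -ν, μ] = 0 := by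
    simp [dotProduct, Fin.sum_univ_five]; ring
  have dBPHP : dotProduct ![0, 0, lamP - γ, -ν, μ] ![0, lamP - γ, 0, μ, ν] = 0 := by
    simp [dotProduct, Fin.sum_univ_five]; ring
  have dBPHM : dotProduct ![0, 0, lamP - γ, -ν, μ] ![0, lamM - γ, 0, μ, ν] = 0 := by
    simp [dotProduct, Fin.sum_univ_five]; ring
  have dBMHP : dotProduct ![0, 0, lamM - γ, -ν, μ] ![0, lamP - γ, 0, μ, ν] = 0 := by
    simp [dotProduct, Fin.sum_univ_five]; ring
  have dBMHM : dotProduct ![0, 0, lamM - γ, -ν, μ] ![0, lamM - γ, 0, μ, ν] = 0 := by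
    simp [dotProduct, Fin.sum_univ_five]; ring
  set g := metricMatrix α β γ μ ν with hg
  set w : Fin 5 → Fin 5 → ℝ :=
    ![(Real.sqrt α)⁻¹ • ![(1:ℝ), 0, 0, 0, 0], fP⁻¹ • ![0, lamP - γ, 0, μ, ν],
      fM⁻¹ • ![0, lamM - γ, 0, μ, ν], fP⁻¹ • ![0, 0, lamP - γ, -ν, μ],
      fM⁻¹ • ![0, 0, lamM - γ, -ν, μ]] with hw
  have hortho : ∀ i j, dotProduct (w i) (g.mulVec (w j)) =
      if i = j then 1 else 0 := by
    intro i j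
    fin_cases i <;> fin_cases j <;>
      simp only [hw, Matrix.cons_val_zero, Matrix.cons_val_one, Matrix.head_cons,
        Matrix.cons_val_two, Matrix.tail_cons, Matrix.cons_val_three,
        Matrix.cons_val_four, Matrix.mulVec_smul, eHP, eHM, eBP, eBM, ge₁,
        smul_dotProduct, dotProduct_smul, smul_eq_mul, Fin.mk_zero,
        Fin.mk_one, Fin.isValue, Fin.reduceEq, reduceIte, dee, deHP, deHM, deBP,
        deBM, dHPe, dHMe, dBPe, dBMe, Fin.reduceFinMk, Matrix.head_fin_const, dHPHP, dHMHM, dBPBP, dBMBM, dHPHM, dHMHP,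
        dBPBM, dBMBP, dHPBP, dHPBM, dHMBP, dHMBM, dBPHP, dBPHM, dBMHP, dBMHM,
        mul_zero, mul_one, zero_mul]
    all_goals try rfl
    all_goals
      field_simp
      first
        | done
        | linear_combination hsa2
        | linear_combination hfP2
        | linear_combination hfM2
        | linear_combination hfP2 + hfM2
        | linear_combination 3 * hfP2
        | linear_combination 3 * hfM2
        | linarith [hfP2, hfM2, hsa2]
  have hli : LinearIndependent ℝ w := by
    rw [Fintype.linearIndependent_iff]
    intro c hc j
    have h := congrArg (fun u => dotProduct u (g.mulVec (w j))) hc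
    simp only [Fin.sum_univ_five, add_dotProduct, smul_dotProduct,
      smul_eq_mul, zero_dotProduct, hortho] at h
    fin_cases j <;> simp_all
  refine ⟨eHP, eHM, eBP, eBM, hli, ?_, hortho⟩
  apply hli.span_eq_top_of_card_eq_finrank
  simp [Module.finrank_fintype_fun_eq_card]
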